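/- Let (X, L) be a random vector with values in ℝ × [0,∞) whose law has density h(x,l) = (1/√(2π))·(|x|+l)·exp(−(|x|+l)²/2) with respect to Lebesgue measure on ℝ × [0,∞). Then the measure μ on ℝ defined by μ(A) = √(π/2)·E[1_A(X/2)·L] is a probability measure, and μ has density y ↦ ∫_{2|y|}^∞ e^{−z²/2} dz with respect to Lebesgue measure. (μ is the law of b(U), the Brownian bridge sampled at an independent uniform time.) -/

import Mathlib

open MeasureTheory ProbabilityTheory Real

/-- The joint density of `(B₁, L₁)`. -/
noncomputable def jointDensity (x l : ℝ) : ℝ :=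
  (1 / Real.sqrt (2 * π)) * (|x| + l) * Real.exp (-(|x| + l) ^ 2 / 2)

open Set Filter

noncomputable def gg (z : ℝ) : ℝ := Real.exp (-z ^ 2 / 2)

lemma gg_eq (z : ℝ) : gg z = Real.exp (-(1/2 : ℝ) * z ^ 2) := by
  unfold gg; ring_nf

lemma integrable_gg : Integrable gg := by
  have := integrable_exp_neg_mul_sq (b := (1/2 : ℝ)) (by norm_num)
  exact this.congr (Filter.Eventually.of_forall fun z => (gg_eq z).symm)

lemma continuous_gg : Continuous gg := by
  unfold gg; continuity

noncomputable def II (t : ℝ) : ℝ := ∫ z in Set.Ioi t, gg z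

lemma II_sub (a b : ℝ) (h : a ≤ b) : II a - II b = ∫ x in a..b, gg x := by
  have hu : Ioi a = Ioc a b ∪ Ioi b := (Ioc_union_Ioi_eq_Ioi h).symm
  have : II a = (∫ x in Ioc a b, gg x) + II b := by
    rw [II, hu, setIntegral_union (Ioc_disjoint_Ioi le_rfl) measurableSet_Ioi
      integrable_gg.integrableOn integrable_gg.integrableOn]
    rfl
  rw [intervalIntegral.integral_of_le h]
  linarith

lemma II_eq (t : ℝ) : II t = II 0 - ∫ x in (0:ℝ)..t, gg x := by
  rcases le_total 0 t with h | h
  · have := II_sub 0 t h; linarith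
  · have := II_sub t 0 h
    rw [intervalIntegral.integral_symm]
    linarith

lemma hasDerivAt_II (t : ℝ) : HasDerivAt II (-(gg t)) t := by
  have h : HasDerivAt (fun u => ∫ x in (0:ℝ)..u, gg x) (gg t) t :=
    intervalIntegral.integral_hasDerivAt_right
      integrable_gg.intervalIntegrable
      (continuous_gg.stronglyMeasurable.stronglyMeasurableAtFilter)
      continuous_gg.continuousAt
  have h2 : HasDerivAt (fun u => II 0 - ∫ x in (0:ℝ)..u, gg x) (-(gg t)) t :=
    h.const_sub (II 0)
  exact h2.congr_of_eventuallyEq (Filter.Eventually.of_forall fun u => II_eq u)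

lemma continuous_II : Continuous II := by
  have : Differentiable ℝ II := fun t => (hasDerivAt_II t).differentiableAt
  exact this.continuous

lemma II_nonneg (t : ℝ) : 0 ≤ II t :=
  setIntegral_nonneg measurableSet_Ioi (fun z _ => (Real.exp_pos _).le)

lemma II_bound {t : ℝ} (ht : 0 ≤ t) : II t ≤ 2 * Real.sqrt π * Real.exp (-(t/2)^2) := by
  have h1 : II t ≤ ∫ z in Ioi t, Real.exp (-(t/2)^2) * Real.exp (-(1/4:ℝ) * z^2) := by
    apply setIntegral_mono_on integrable_gg.integrableOn
      (((integrable_exp_neg_mul_sq (by norm_num : (0:ℝ) < 1/4)).const_mul _).integrableOn)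
      measurableSet_Ioi
    intro z hz
    rw [← Real.exp_add, gg]
    apply Real.exp_le_exp.2
    have hzt : t ≤ z := (le_of_lt hz)
    nlinarith [sq_nonneg (z - t), sq_nonneg (z + t)]
  have h2 : (∫ z in Ioi t, Real.exp (-(t/2)^2) * Real.exp (-(1/4:ℝ) * z^2))
      = Real.exp (-(t/2)^2) * ∫ z in Ioi t, Real.exp (-(1/4:ℝ) * z^2) := by
    rw [integral_const_mul]
  have h3 : (∫ z in Ioi t, Real.exp (-(1/4:ℝ) * z^2)) ≤ ∫ z, Real.exp (-(1/4:ℝ) * z^2) :=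
    setIntegral_le_integral (integrable_exp_neg_mul_sq (by norm_num))
      (Filter.Eventually.of_forall fun z => (Real.exp_pos _).le)
  have h4 : (∫ z : ℝ, Real.exp (-(1/4:ℝ) * z^2)) = 2 * Real.sqrt π := by
    rw [integral_gaussian]
    rw [show (π / (1/4 : ℝ)) = 4 * π by ring, show (4:ℝ) * π = 2^2 * π by ring,
      Real.sqrt_mul (by positivity), Real.sqrt_sq (by norm_num)]
  calc II t ≤ _ := h1
    _ = _ := h2
    _ ≤ Real.exp (-(t/2)^2) * (2 * Real.sqrt π) := by
        apply mul_le_mul_of_nonneg_left (h3.trans_eq h4) (Real.exp_pos _).le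
    _ = 2 * Real.sqrt π * Real.exp (-(t/2)^2) := by ring

lemma tendsto_exp_neg_sq_div : Filter.Tendsto (fun t : ℝ => Real.exp (-(t/2)^2)) atTop (nhds 0) := by
  apply Real.tendsto_exp_atBot.comp
  apply Filter.tendsto_neg_atTop_atBot.comp
  exact (tendsto_pow_atTop two_ne_zero).comp (tendsto_id.atTop_div_const (by norm_num))

lemma tendsto_II_atTop : Filter.Tendsto II atTop (nhds 0) := by
  apply squeeze_zero' (Filter.Eventually.of_forall fun t => II_nonneg t)
    (Filter.eventually_atTop.2 ⟨0, fun t ht => II_bound ht⟩)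
  simpa using tendsto_exp_neg_sq_div.const_mul (2 * Real.sqrt π)

lemma tendsto_mul_exp_gen {b : ℝ} (hb : 0 < b) :
    Filter.Tendsto (fun x : ℝ => x * Real.exp (-b * x ^ 2)) atTop (nhds 0) := by
  have key : Filter.Tendsto (fun x : ℝ => x * Real.exp (-x)) atTop (nhds 0) := by
    simpa using tendsto_pow_mul_exp_neg_atTop_nhds_zero 1
  apply squeeze_zero' (Filter.eventually_atTop.2 ⟨0, fun x hx => by positivity⟩)
    (Filter.eventually_atTop.2 ⟨1/b, fun x hx => ?_⟩) key
  have hx0 : 0 < x := lt_of_lt_of_le (by positivity) hx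
  have hbx : x ≤ b * x ^ 2 := by
    rw [div_le_iff₀ hb] at hx
    nlinarith
  have hle := Real.exp_le_exp.2 (neg_le_neg hbx)
  calc x * Real.exp (-b * x^2) = x * Real.exp (-(b * x^2)) := by ring_nf
    _ ≤ x * Real.exp (-x) := mul_le_mul_of_nonneg_left hle hx0.le

lemma exp_quad_bound {s : ℝ} (hs : 0 ≤ s) : s * Real.exp (-(s/4)) ≤ 2 := by
  have h := Real.add_one_le_exp (s/8)
  have e2 : Real.exp (s/4) = Real.exp (s/8) * Real.exp (s/8) := by
    rw [← Real.exp_add]; ring_nf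
  have hpos := Real.exp_pos (s/8)
  rw [Real.exp_neg]
  have heq : s * (Real.exp (s/4))⁻¹ = s / Real.exp (s/4) := by ring
  rw [heq, div_le_iff₀ (Real.exp_pos _), e2]
  nlinarith [sq_nonneg (s - 8)]

lemma hasDerivAt_gg (u : ℝ) : HasDerivAt gg (-u * gg u) u := by
  have h1 : HasDerivAt (fun v : ℝ => -v^2/2) (-u) u := by
    have h := ((hasDerivAt_pow 2 u).neg).div_const 2
    norm_num at h
    exact h.congr_deriv (by ring)
  have h2 := h1.exp
  have : gg = fun v : ℝ => Real.exp (-v^2/2) := by funext v; rfl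
  rw [this]
  convert h2 using 1
  simp [gg]; ring

lemma key_integrableOn_gen {a : ℝ} (ha : 0 ≤ a) :
    IntegrableOn (fun l => l * (a + l) * gg (a + l)) (Set.Ioi (0:ℝ)) := by
  have hbound : ∀ l : ℝ, 0 ≤ l → l * (a + l) * gg (a + l) ≤ 2 * Real.exp (-(1/4:ℝ) * l^2) := by
    intro l hl
    have hal : (0:ℝ) ≤ a + l := by linarith
    have hsplit : gg (a + l) = Real.exp (-((a+l)^2/4)) * Real.exp (-((a+l)^2/4)) := by
      rw [gg, ← Real.exp_add]; ring_nf
    have hq := exp_quad_bound (s := (a+l)^2) (by positivity)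
    have h1 : l * (a + l) * gg (a + l) ≤ (a+l)^2 * gg (a + l) := by
      have : l * (a + l) ≤ (a+l)^2 := by nlinarith
      exact mul_le_mul_of_nonneg_right this (Real.exp_pos _).le
    have h2 : (a+l)^2 * gg (a + l) ≤ 2 * Real.exp (-((a+l)^2/4)) := by
      rw [hsplit, ← mul_assoc]
      apply mul_le_mul_of_nonneg_right _ (Real.exp_pos _).le
      calc (a+l)^2 * Real.exp (-((a+l)^2/4)) = (a+l)^2 * Real.exp (-((a+l)^2)/4) := by ring_nf
        _ ≤ 2 := by
            have := hq
            convert this using 3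
            ring
    have h3 : Real.exp (-((a+l)^2/4)) ≤ Real.exp (-(1/4:ℝ) * l^2) := by
      apply Real.exp_le_exp.2
      nlinarith
    calc l * (a + l) * gg (a + l) ≤ (a+l)^2 * gg (a + l) := h1
      _ ≤ 2 * Real.exp (-((a+l)^2/4)) := h2
      _ ≤ 2 * Real.exp (-(1/4:ℝ) * l^2) := by linarith [h3]
  have hint : IntegrableOn (fun l => l * (a + l) * gg (a + l)) (Set.Ioi (0:ℝ)) := by
    apply Integrable.mono' (g := fun l => 2 * Real.exp (-(1/4:ℝ) * l^2))
      (((integrable_exp_neg_mul_sq (by norm_num : (0:ℝ) < 1/4)).const_mul 2).integrableOn)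
    · exact (((continuous_id.mul (continuous_const.add continuous_id)).mul
        (continuous_gg.comp (continuous_const.add continuous_id))).aestronglyMeasurable).restrict
    · filter_upwards [ae_restrict_mem measurableSet_Ioi] with l hl
      have hl0 : (0:ℝ) ≤ l := le_of_lt hl
      have hal : (0:ℝ) ≤ a + l := by linarith
      have hgg : (0:ℝ) < gg (a + l) := Real.exp_pos _
      rw [Real.norm_eq_abs, abs_of_nonneg (mul_nonneg (mul_nonneg hl0 hal) hgg.le)]
      exact hbound l hl0
  exact hint

lemma key_integral {a : ℝ} (ha : 0 ≤ a) :
    ∫ l in Set.Ioi (0:ℝ), l * (a + l) * gg (a + l) = II a := by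
  have hadd : ∀ x : ℝ, HasDerivAt (fun l : ℝ => a + l) 1 x := fun x => by
    simpa using (hasDerivAt_id x).const_add a
  have hderiv : ∀ x ∈ Set.Ici (0:ℝ), HasDerivAt (fun l => -(l * gg (a + l)) - II (a + l))
      (x * (a + x) * gg (a + x)) x := by
    intro x _
    have hg : HasDerivAt (fun l => gg (a + l)) (-(a + x) * gg (a + x)) x := by
      simpa [Function.comp_def] using (hasDerivAt_gg (a + x)).comp x (hadd x)
    have hI : HasDerivAt (fun l => II (a + l)) (-(gg (a + x))) x := by
      simpa [Function.comp_def] using (hasDerivAt_II (a + x)).comp x (hadd x)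
    have hmul : HasDerivAt (fun l => l * gg (a + l))
        (1 * gg (a + x) + x * (-(a + x) * gg (a + x))) x := (hasDerivAt_id x).mul hg
    have h := (hmul.neg).sub hI
    exact h.congr_deriv (by ring)
  have hbound : ∀ l : ℝ, 0 ≤ l → l * (a + l) * gg (a + l) ≤ 2 * Real.exp (-(1/4:ℝ) * l^2) := by
    intro l hl
    have hal : (0:ℝ) ≤ a + l := by linarith
    have hsplit : gg (a + l) = Real.exp (-((a+l)^2/4)) * Real.exp (-((a+l)^2/4)) := by
      rw [gg, ← Real.exp_add]; ring_nf
    have hq := exp_quad_bound (s := (a+l)^2) (by positivity)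
    have h1 : l * (a + l) * gg (a + l) ≤ (a+l)^2 * gg (a + l) := by
      have : l * (a + l) ≤ (a+l)^2 := by nlinarith
      exact mul_le_mul_of_nonneg_right this (Real.exp_pos _).le
    have h2 : (a+l)^2 * gg (a + l) ≤ 2 * Real.exp (-((a+l)^2/4)) := by
      rw [hsplit, ← mul_assoc]
      apply mul_le_mul_of_nonneg_right _ (Real.exp_pos _).le
      calc (a+l)^2 * Real.exp (-((a+l)^2/4)) = (a+l)^2 * Real.exp (-((a+l)^2)/4) := by ring_nf
        _ ≤ 2 := by
            have := hq
            convert this using 3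
            ring
    have h3 : Real.exp (-((a+l)^2/4)) ≤ Real.exp (-(1/4:ℝ) * l^2) := by
      apply Real.exp_le_exp.2
      nlinarith
    calc l * (a + l) * gg (a + l) ≤ (a+l)^2 * gg (a + l) := h1
      _ ≤ 2 * Real.exp (-((a+l)^2/4)) := h2
      _ ≤ 2 * Real.exp (-(1/4:ℝ) * l^2) := by linarith [h3]
  have hint : IntegrableOn (fun l => l * (a + l) * gg (a + l)) (Set.Ioi (0:ℝ)) := by
    apply Integrable.mono' (g := fun l => 2 * Real.exp (-(1/4:ℝ) * l^2))
      (((integrable_exp_neg_mul_sq (by norm_num : (0:ℝ) < 1/4)).const_mul 2).integrableOn)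
    · exact (((continuous_id.mul (continuous_const.add continuous_id)).mul
        (continuous_gg.comp (continuous_const.add continuous_id))).aestronglyMeasurable).restrict
    · filter_upwards [ae_restrict_mem measurableSet_Ioi] with l hl
      have hl0 : (0:ℝ) ≤ l := le_of_lt hl
      have hal : (0:ℝ) ≤ a + l := by linarith
      have hgg : (0:ℝ) < gg (a + l) := Real.exp_pos _
      rw [Real.norm_eq_abs, abs_of_nonneg (mul_nonneg (mul_nonneg hl0 hal) hgg.le)]
      exact hbound l hl0
  have htend : Filter.Tendsto (fun l => -(l * gg (a + l)) - II (a + l)) atTop (nhds 0) := by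
    have h2 : Filter.Tendsto (fun l : ℝ => II (a + l)) atTop (nhds 0) :=
      tendsto_II_atTop.comp (tendsto_atTop_add_const_left atTop a tendsto_id)
    have h1 : Filter.Tendsto (fun l : ℝ => l * gg (a + l)) atTop (nhds 0) := by
      apply squeeze_zero' (Filter.eventually_atTop.2
          ⟨0, fun l hl => mul_nonneg hl (Real.exp_pos _).le⟩)
        (Filter.eventually_atTop.2 ⟨0, fun l hl => ?_⟩) (tendsto_mul_exp_gen (by norm_num : (0:ℝ) < 1/2))
      apply mul_le_mul_of_nonneg_left _ hl
      show Real.exp (-(a+l)^2/2) ≤ Real.exp (-(1/2:ℝ) * l^2)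
      apply Real.exp_le_exp.2
      nlinarith
    simpa using (h1.neg).sub h2
  have := integral_Ioi_of_hasDerivAt_of_tendsto' hderiv hint htend
  rw [this]
  simp

lemma tendsto_exp_neg_mul_sq' {b : ℝ} (hb : 0 < b) :
    Filter.Tendsto (fun y : ℝ => Real.exp (-b * y ^ 2)) atTop (nhds 0) := by
  apply Real.tendsto_exp_atBot.comp
  have h1 : Filter.Tendsto (fun y : ℝ => b * y ^ 2) atTop atTop :=
    (tendsto_pow_atTop two_ne_zero).const_mul_atTop hb
  exact (Filter.tendsto_neg_atTop_atBot.comp h1).congr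
    fun y => by simp only [Function.comp_apply]; ring

lemma II2_bound {y : ℝ} (hy : 0 ≤ y) : II (2 * y) ≤ 2 * Real.sqrt π * Real.exp (-(1:ℝ) * y ^ 2) := by
  have := II_bound (t := 2 * y) (by linarith)
  convert this using 3
  ring

lemma II2_integrableOn : IntegrableOn (fun y => II (2 * y)) (Set.Ioi (0:ℝ)) := by
  apply Integrable.mono'
    (((integrable_exp_neg_mul_sq (by norm_num : (0:ℝ) < 1)).const_mul (2 * Real.sqrt π)).integrableOn)
  · exact ((continuous_II.comp (continuous_const.mul continuous_id)).aestronglyMeasurable).restrict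
  · filter_upwards [ae_restrict_mem measurableSet_Ioi] with y hy
    rw [Real.norm_eq_abs, abs_of_nonneg (II_nonneg _)]
    exact II2_bound (le_of_lt hy)

lemma integral_II2 : ∫ y in Set.Ioi (0:ℝ), II (2 * y) = 1 / 2 := by
  have hderiv : ∀ x ∈ Set.Ici (0:ℝ),
      HasDerivAt (fun y => y * II (2 * y) - Real.exp (-2 * y ^ 2) / 2) (II (2 * x)) x := by
    intro x _
    have h2 : HasDerivAt (fun y : ℝ => 2 * y) 2 x := by
      simpa using (hasDerivAt_id x).const_mul 2
    have hI2 : HasDerivAt (fun y => II (2 * y)) (-(gg (2 * x)) * 2) x :=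
      (hasDerivAt_II (2 * x)).comp x h2
    have hmul : HasDerivAt (fun y => y * II (2 * y))
        (1 * II (2 * x) + x * (-(gg (2 * x)) * 2)) x := (hasDerivAt_id x).mul hI2
    have hsq : HasDerivAt (fun y : ℝ => -2 * y ^ 2) (-4 * x) x := by
      have h0 := (hasDerivAt_pow 2 x).const_mul (-2 : ℝ)
      exact h0.congr_deriv (by push_cast; ring)
    have hexp : HasDerivAt (fun y : ℝ => Real.exp (-2 * y ^ 2) / 2)
        (Real.exp (-2 * x ^ 2) * (-4 * x) / 2) x := (hsq.exp).div_const 2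
    have h := hmul.sub hexp
    have hggx : gg (2 * x) = Real.exp (-2 * x ^ 2) := by
      show Real.exp (-(2*x) ^ 2 / 2) = _
      congr 1
      ring
    exact h.congr_deriv (by rw [hggx]; ring)
  have htend : Filter.Tendsto (fun y : ℝ => y * II (2 * y) - Real.exp (-2 * y ^ 2) / 2)
      atTop (nhds 0) := by
    have h1 : Filter.Tendsto (fun y : ℝ => y * II (2 * y)) atTop (nhds 0) := by
      have hg : Filter.Tendsto (fun y : ℝ => 2 * Real.sqrt π * (y * Real.exp (-(1:ℝ) * y ^ 2)))
          atTop (nhds 0) := by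
        have h := (tendsto_mul_exp_gen (by norm_num : (0:ℝ) < 1)).const_mul (2 * Real.sqrt π)
        rw [mul_zero] at h
        exact h
      apply squeeze_zero' (Filter.eventually_atTop.2
          ⟨0, fun y hy => mul_nonneg hy (II_nonneg _)⟩)
        (Filter.eventually_atTop.2 ⟨0, fun y hy => ?_⟩) hg
      calc y * II (2 * y) ≤ y * (2 * Real.sqrt π * Real.exp (-(1:ℝ) * y ^ 2)) :=
            mul_le_mul_of_nonneg_left (II2_bound hy) hy
        _ = 2 * Real.sqrt π * (y * Real.exp (-(1:ℝ) * y ^ 2)) := by ring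
    have h2 : Filter.Tendsto (fun y : ℝ => Real.exp (-2 * y ^ 2) / 2) atTop (nhds 0) := by
      simpa using (tendsto_exp_neg_mul_sq' (by norm_num : (0:ℝ) < 2)).div_const 2
    simpa using h1.sub h2
  have h := integral_Ioi_of_hasDerivAt_of_tendsto' hderiv II2_integrableOn htend
  rw [h]
  norm_num

lemma integrable_IIabs : Integrable (fun y : ℝ => II (2 * |y|)) := by
  apply Integrable.mono'
    ((integrable_exp_neg_mul_sq (by norm_num : (0:ℝ) < 1)).const_mul (2 * Real.sqrt π))
  · exact (continuous_II.comp (continuous_const.mul continuous_abs)).aestronglyMeasurable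
  · refine Filter.Eventually.of_forall fun y => ?_
    rw [Real.norm_eq_abs, abs_of_nonneg (II_nonneg _)]
    have := II2_bound (y := |y|) (abs_nonneg y)
    simpa [sq_abs] using this

lemma integral_IIabs : ∫ y : ℝ, II (2 * |y|) = 1 := by
  rw [integral_comp_abs (f := fun x => II (2 * x)), integral_II2]
  norm_num

lemma const_fact : Real.sqrt (π / 2) * (2 * (1 / Real.sqrt (2 * π))) = 1 := by
  have hπ : 0 < π := Real.pi_pos
  have h1 : Real.sqrt (π / 2) * Real.sqrt (2 * π) = π := by
    rw [← Real.sqrt_mul (by positivity), show (π / 2) * (2 * π) = π ^ 2 by ring]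
    exact Real.sqrt_sq hπ.le
  have h2 : (0:ℝ) < Real.sqrt (2 * π) := Real.sqrt_pos.2 (by positivity)
  have h3 : Real.sqrt (2 * π) ^ 2 = 2 * π := Real.sq_sqrt (by positivity)
  have h4 : Real.sqrt 2 * Real.sqrt 2 = 2 := Real.mul_self_sqrt (by norm_num)
  field_simp
  rw [show π * 2 = 2 ^ 2 * (π / 2) by ring, Real.sqrt_mul (by norm_num), Real.sqrt_sq (by norm_num)]

lemma key_integrableOn {x : ℝ} :
    IntegrableOn (fun l => l * jointDensity x l) (Set.Ioi (0:ℝ)) := by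
  have hfun : ∀ l : ℝ, l * jointDensity x l
      = (1 / Real.sqrt (2 * π)) * (l * (|x| + l) * gg (|x| + l)) := by
    intro l; simp only [jointDensity, gg]; ring
  have h := (key_integrableOn_gen (abs_nonneg x)).const_mul (1 / Real.sqrt (2 * π))
  exact h.congr (Filter.Eventually.of_forall fun l => (hfun l).symm)

/-- If `(X, L)` has density `h(x,l)` (supported on `ℝ × [0,∞)`) with respect to Lebesgue measure,
then the measure `μ` on `ℝ` defined by `μ(A) = √(π/2)·E[1_A(X/2)·L]` is a probability measure,
with density `y ↦ ∫_{2|y|}^∞ e^{-z²/2} dz` with respect to Lebesgue measure. (It is the law of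
the Brownian bridge sampled at an independent uniform time.) -/
theorem law_of_uniformly_sampled_bridge {Ω : Type*} [MeasureSpace Ω]
    [IsProbabilityMeasure (ℙ : Measure Ω)]
    (X L : Ω → ℝ) (hX : Measurable X) (hL : Measurable L)
    (hlaw : Measure.map (fun ω => (X ω, L ω)) ℙ
      = (volume : Measure (ℝ × ℝ)).withDensity
          (fun p => ENNReal.ofReal (if 0 ≤ p.2 then jointDensity p.1 p.2 else 0)))
    (μ : Measure ℝ)
    (hμ : ∀ A : Set ℝ, MeasurableSet A →
      μ A = ENNReal.ofReal
        (Real.sqrt (π / 2) * ∫ ω, A.indicator (fun _ => (1 : ℝ)) (X ω / 2) * L ω ∂ℙ)) :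
    IsProbabilityMeasure μ ∧
      μ = volume.withDensity
            (fun y => ENNReal.ofReal (∫ z in Set.Ioi (2 * |y|), Real.exp (-z ^ 2 / 2))) := by
  classical
  set c : ℝ := 1 / Real.sqrt (2 * π) with hc
  have hc0 : 0 ≤ c := by positivity
  have hpair : Measurable fun ω => (X ω, L ω) := hX.prodMk hL
  have hjd : Measurable fun p : ℝ × ℝ => jointDensity p.1 p.2 := by
    apply Continuous.measurable
    apply Continuous.mul
    · exact continuous_const.mul ((continuous_abs.comp continuous_fst).add continuous_snd)
    · exact Real.continuous_exp.comp
        (((((continuous_abs.comp continuous_fst).add continuous_snd).pow 2).neg).div_const 2)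
  have hρ : Measurable fun p : ℝ × ℝ =>
      ENNReal.ofReal (if 0 ≤ p.2 then jointDensity p.1 p.2 else 0) :=
    ENNReal.measurable_ofReal.comp
      (Measurable.ite (measurableSet_le measurable_const measurable_snd) hjd measurable_const)
  have hII2meas : Measurable fun y : ℝ => ENNReal.ofReal (2 * c * II (2 * |y|)) :=
    ENNReal.measurable_ofReal.comp
      ((continuous_const.mul (continuous_II.comp (continuous_const.mul continuous_abs))).measurable)
  -- main computation
  have main : ∀ A : Set ℝ, MeasurableSet A →
      (∫⁻ ω, ENNReal.ofReal (A.indicator (fun _ => (1 : ℝ)) (X ω / 2) * L ω) ∂ℙ)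
        = ∫⁻ y in A, ENNReal.ofReal (2 * c * II (2 * |y|)) := by
    intro A hA
    have hind : Measurable (A.indicator (fun _ => (1 : ℝ))) := measurable_const.indicator hA
    have hindnn : ∀ t : ℝ, 0 ≤ A.indicator (fun _ => (1 : ℝ)) t :=
      fun t => Set.indicator_nonneg (fun _ _ => zero_le_one) t
    have hgA : Measurable fun p : ℝ × ℝ =>
        ENNReal.ofReal (A.indicator (fun _ => (1 : ℝ)) (p.1 / 2) * p.2) :=
      ENNReal.measurable_ofReal.comp
        ((hind.comp (measurable_fst.div_const 2)).mul measurable_snd)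
    have step1 : (∫⁻ ω, ENNReal.ofReal (A.indicator (fun _ => (1 : ℝ)) (X ω / 2) * L ω) ∂ℙ)
        = ∫⁻ p : ℝ × ℝ, ENNReal.ofReal (A.indicator (fun _ => (1 : ℝ)) (p.1 / 2) * p.2)
            ∂(Measure.map (fun ω => (X ω, L ω)) ℙ) :=
      (lintegral_map hgA hpair).symm
    rw [step1, hlaw, lintegral_withDensity_eq_lintegral_mul _ hρ hgA]
    rw [Measure.volume_eq_prod]
    simp only [Pi.mul_apply]
    rw [lintegral_prod _ ((hρ.mul hgA).aemeasurable.congr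
      (Filter.Eventually.of_forall fun p => by simp [Pi.mul_apply]))]
    -- inner integral
    have inner : ∀ x : ℝ,
        (∫⁻ l, ENNReal.ofReal (if 0 ≤ (x, l).2 then jointDensity (x, l).1 (x, l).2 else 0) *
            ENNReal.ofReal (A.indicator (fun _ => (1 : ℝ)) ((x, l).1 / 2) * (x, l).2))
          = ENNReal.ofReal (A.indicator (fun _ => (1 : ℝ)) (x / 2)) * ENNReal.ofReal (c * II |x|) := by
      intro x
      have hptwise : ∀ l : ℝ,
          ENNReal.ofReal (if 0 ≤ (x, l).2 then jointDensity (x, l).1 (x, l).2 else 0) *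
            ENNReal.ofReal (A.indicator (fun _ => (1 : ℝ)) ((x, l).1 / 2) * (x, l).2)
          = (Set.Ioi (0:ℝ)).indicator
              (fun l => ENNReal.ofReal (A.indicator (fun _ => (1 : ℝ)) (x / 2)) *
                ENNReal.ofReal (l * jointDensity x l)) l := by
        intro l
        rcases lt_trichotomy l 0 with hl | hl | hl
        · have h1 : l ∉ Set.Ioi (0:ℝ) := by simp [hl.le.not_gt]
          rw [Set.indicator_of_notMem h1, if_neg (not_le.2 hl)]
          simp
        · subst hl
          have h1 : (0:ℝ) ∉ Set.Ioi (0:ℝ) := by simp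
          rw [Set.indicator_of_notMem h1]
          simp
        · have h1 : l ∈ Set.Ioi (0:ℝ) := hl
          rw [Set.indicator_of_mem h1, if_pos hl.le,
            ENNReal.ofReal_mul (hindnn _), ENNReal.ofReal_mul hl.le]
          ring
      rw [lintegral_congr hptwise, lintegral_indicator measurableSet_Ioi,
        lintegral_const_mul' _ _ ENNReal.ofReal_ne_top]
      congr 1
      have hnn : 0 ≤ᵐ[volume.restrict (Set.Ioi (0:ℝ))] fun l => l * jointDensity x l := by
        filter_upwards [ae_restrict_mem measurableSet_Ioi] with l hl
        have : 0 ≤ jointDensity x l := by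
          simp only [jointDensity]
          exact mul_nonneg (mul_nonneg (by positivity)
            (add_nonneg (abs_nonneg x) hl.le)) (Real.exp_pos _).le
        exact mul_nonneg hl.le this
      rw [← ofReal_integral_eq_lintegral_ofReal key_integrableOn hnn]
      congr 1
      have hfun : ∀ l : ℝ, l * jointDensity x l = c * (l * (|x| + l) * gg (|x| + l)) := by
        intro l; simp only [jointDensity, gg, hc]; ring
      calc (∫ l in Set.Ioi (0:ℝ), l * jointDensity x l)
          = ∫ l in Set.Ioi (0:ℝ), c * (l * (|x| + l) * gg (|x| + l)) :=
            integral_congr_ae (Filter.Eventually.of_forall fun l => hfun l)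
        _ = c * ∫ l in Set.Ioi (0:ℝ), l * (|x| + l) * gg (|x| + l) := integral_const_mul c _
        _ = c * II |x| := by rw [key_integral (abs_nonneg x)]
    rw [lintegral_congr inner]
    -- change of variables x = 2 y
    have hG : Measurable fun x : ℝ =>
        ENNReal.ofReal (A.indicator (fun _ => (1 : ℝ)) (x / 2)) * ENNReal.ofReal (c * II |x|) :=
      (ENNReal.measurable_ofReal.comp (hind.comp (measurable_id.div_const 2))).mul
        (ENNReal.measurable_ofReal.comp
          ((continuous_const.mul (continuous_II.comp continuous_abs)).measurable))
    have hvol : (volume : Measure ℝ)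
        = ENNReal.ofReal |(2:ℝ)| • Measure.map (fun y : ℝ => 2 * y) volume :=
      (Real.smul_map_volume_mul_left two_ne_zero).symm
    calc (∫⁻ x, ENNReal.ofReal (A.indicator (fun _ => (1 : ℝ)) (x / 2)) *
            ENNReal.ofReal (c * II |x|))
        = ENNReal.ofReal |(2:ℝ)| * ∫⁻ x, (fun x : ℝ =>
            ENNReal.ofReal (A.indicator (fun _ => (1 : ℝ)) (x / 2)) * ENNReal.ofReal (c * II |x|)) x
              ∂(Measure.map (fun y : ℝ => 2 * y) volume) := by
          rw [← smul_eq_mul, ← lintegral_smul_measure, ← hvol]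
      _ = ENNReal.ofReal 2 * ∫⁻ y, ENNReal.ofReal (A.indicator (fun _ => (1 : ℝ)) ((2 * y) / 2)) *
            ENNReal.ofReal (c * II |2 * y|) := by
          rw [lintegral_map hG (measurable_const_mul 2), abs_two]
      _ = ∫⁻ y, A.indicator (fun y => ENNReal.ofReal (2 * c * II (2 * |y|))) y := by
          rw [← lintegral_const_mul' _ _ ENNReal.ofReal_ne_top]
          apply lintegral_congr
          intro y
          rw [show (2 * y) / 2 = y by ring, show |2 * y| = 2 * |y| by rw [abs_mul, abs_two]]
          by_cases hy : y ∈ A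
          · rw [Set.indicator_of_mem hy, Set.indicator_of_mem hy]
            rw [show (2:ℝ) * c * II (2 * |y|) = 2 * (c * II (2 * |y|)) by ring,
              ENNReal.ofReal_mul (by norm_num : (0:ℝ) ≤ 2)]
            simp [ENNReal.ofReal_one]
          · rw [Set.indicator_of_notMem hy, Set.indicator_of_notMem hy]
            simp
      _ = ∫⁻ y in A, ENNReal.ofReal (2 * c * II (2 * |y|)) := lintegral_indicator hA _
  -- L is a.e. nonnegative
  have hLnn : ∀ᵐ ω ∂ℙ, 0 ≤ L ω := by
    have hset : MeasurableSet {p : ℝ × ℝ | p.2 < 0} :=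
      measurableSet_lt measurable_snd measurable_const
    have h0 : (Measure.map (fun ω => (X ω, L ω)) ℙ) {p : ℝ × ℝ | p.2 < 0} = 0 := by
      rw [hlaw, withDensity_apply _ hset]
      have hz : ∀ p ∈ {p : ℝ × ℝ | p.2 < 0},
          ENNReal.ofReal (if 0 ≤ p.2 then jointDensity p.1 p.2 else 0) = 0 := by
        intro p hp
        rw [if_neg (not_le.2 hp), ENNReal.ofReal_zero]
      rw [setLIntegral_congr_fun hset (fun p hp => hz p hp), lintegral_zero]
    rw [Measure.map_apply hpair hset] at h0
    rw [ae_iff]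
    convert h0 using 2
    ext ω
    simp [not_le]
  -- finiteness of the density integral
  have hnnII : ∀ y : ℝ, 0 ≤ 2 * c * II (2 * |y|) :=
    fun y => mul_nonneg (by positivity) (II_nonneg _)
  have hfin : (∫⁻ y, ENNReal.ofReal (2 * c * II (2 * |y|))) ≠ ⊤ := by
    rw [← ofReal_integral_eq_lintegral_ofReal (integrable_IIabs.const_mul (2 * c))
      (ae_of_all _ hnnII)]
    exact ENNReal.ofReal_ne_top
  -- integrability of L
  have hLint : Integrable L ℙ := by
    refine ⟨hL.aestronglyMeasurable, ?_⟩
    rw [hasFiniteIntegral_iff_norm]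
    have heq : (∫⁻ ω, ENNReal.ofReal ‖L ω‖ ∂ℙ)
        = ∫⁻ ω, ENNReal.ofReal (Set.univ.indicator (fun _ => (1 : ℝ)) (X ω / 2) * L ω) ∂ℙ := by
      apply lintegral_congr_ae
      filter_upwards [hLnn] with ω hω
      rw [Set.indicator_univ, Real.norm_eq_abs, abs_of_nonneg hω]
      simp
    rw [heq, main Set.univ MeasurableSet.univ, Measure.restrict_univ]
    exact hfin.lt_top
  -- integrability of the truncated integrand
  have hAint : ∀ A : Set ℝ, MeasurableSet A →
      Integrable (fun ω => A.indicator (fun _ => (1 : ℝ)) (X ω / 2) * L ω) ℙ := by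
    intro A hA
    apply Integrable.mono' hLint.abs
      (((measurable_const.indicator hA).comp (hX.div_const 2)).mul hL).aestronglyMeasurable
    refine ae_of_all _ fun ω => ?_
    rw [Real.norm_eq_abs]
    show |A.indicator (fun _ => (1 : ℝ)) (X ω / 2) * L ω| ≤ |L ω|
    rw [abs_mul]
    have h1 : |A.indicator (fun _ => (1 : ℝ)) (X ω / 2)| ≤ 1 := by
      by_cases h : X ω / 2 ∈ A
      · rw [Set.indicator_of_mem h]; norm_num
      · rw [Set.indicator_of_notMem h]; norm_num
    calc |A.indicator (fun _ => (1 : ℝ)) (X ω / 2)| * |L ω| ≤ 1 * |L ω| :=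
          mul_le_mul_of_nonneg_right h1 (abs_nonneg _)
      _ = |L ω| := one_mul _
  -- the measure μ computed
  have key : ∀ A : Set ℝ, MeasurableSet A →
      μ A = ∫⁻ y in A, ENNReal.ofReal (II (2 * |y|)) := by
    intro A hA
    have hnnprod : 0 ≤ᵐ[ℙ] fun ω => A.indicator (fun _ => (1 : ℝ)) (X ω / 2) * L ω := by
      filter_upwards [hLnn] with ω hω
      exact mul_nonneg (Set.indicator_nonneg (fun _ _ => zero_le_one) _) hω
    rw [hμ A hA, ENNReal.ofReal_mul (Real.sqrt_nonneg _),
      ofReal_integral_eq_lintegral_ofReal (hAint A hA) hnnprod, main A hA,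
      ← lintegral_const_mul' _ _ ENNReal.ofReal_ne_top]
    apply setLIntegral_congr_fun hA
    intro y _
    dsimp only
    rw [← ENNReal.ofReal_mul (Real.sqrt_nonneg _),
      show Real.sqrt (π / 2) * (2 * c * II (2 * |y|))
        = (Real.sqrt (π / 2) * (2 * (1 / Real.sqrt (2 * π)))) * II (2 * |y|) by rw [hc]; ring,
      const_fact, one_mul]
  constructor
  · constructor
    rw [key Set.univ MeasurableSet.univ, Measure.restrict_univ,
      ← ofReal_integral_eq_lintegral_ofReal integrable_IIabs (ae_of_all _ fun y => II_nonneg _),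
      integral_IIabs, ENNReal.ofReal_one]
  · ext A hA
    rw [key A hA, withDensity_apply _ hA]
    rfl
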